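/- Strict convexity is equivalent to uniqueness of the maximizer in the Legendre transform: let q' ∈ (1,∞), C > 0, and let ℓ : ℝ^d → ℝ be differentiable and coercive in the sense that ℓ(α) ≥ C⁻¹|α|^{q'} − C for all α ∈ ℝ^d. Then ℓ is strictly convex if and only if for every p ∈ ℝ^d the function α ↦ −p·α − ℓ(α) attains its supremum over ℝ^d at exactly one point. -/

import Mathlib

open MeasureTheory Real Set
open scoped InnerProductSpace

noncomputable section

/-- The Euclidean state space `ℝ^d`. -/
abbrev E (d : ℕ) : Type := EuclideanSpace ℝ (Fin d)

lemma key_bound (d : ℕ) (q' C : ℝ) (hq' : 1 < q') (hC : 0 < C)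
    (ℓ : E d → ℝ) (hcoer : ∀ α : E d, C⁻¹ * ‖α‖ ^ q' - C ≤ ℓ α)
    (K : ℝ) (hK : 0 ≤ K) (p x : E d) (hp : ‖p‖ ≤ K)
    (hx : max 1 ((C * (K + C + |ℓ 0| + 1)) ^ (q' - 1)⁻¹) < ‖x‖) :
    ⟪p, x⟫_ℝ - ℓ x < -ℓ 0 := by
  set t : ℝ := ‖x‖ with ht
  have ht1 : (1 : ℝ) < t := lt_of_le_of_lt (le_max_left _ _) hx
  have ht0 : (0 : ℝ) < t := lt_trans one_pos ht1
  set A : ℝ := C * (K + C + |ℓ 0| + 1) with hA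
  have hA0 : 0 < A := by positivity
  have hq0 : 0 < q' - 1 := by linarith
  have hAt : A < t ^ (q' - 1) := by
    have h1 : (A ^ (q' - 1)⁻¹) ^ (q' - 1) < t ^ (q' - 1) :=
      Real.rpow_lt_rpow (Real.rpow_nonneg hA0.le _)
        (lt_of_le_of_lt (le_max_right _ _) hx) hq0
    rwa [← Real.rpow_mul hA0.le, inv_mul_cancel₀ hq0.ne', Real.rpow_one] at h1
  have hts : t ^ q' = t ^ (q' - 1) * t := by
    nth_rewrite 3 [← Real.rpow_one t]
    rw [← Real.rpow_add ht0]
    ring_nf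
  have hcoe := hcoer x
  have hstep : C⁻¹ * A * t - C ≤ ℓ x := by
    calc C⁻¹ * A * t - C ≤ C⁻¹ * (t ^ (q' - 1) * t) - C := by
          have := mul_le_mul_of_nonneg_right hAt.le ht0.le
          nlinarith [inv_pos.mpr hC]
      _ = C⁻¹ * t ^ q' - C := by rw [hts]
      _ ≤ ℓ x := hcoe
  have hCA : C⁻¹ * A = K + C + |ℓ 0| + 1 := by
    field_simp [hA]
    exact hA
  have hip : ⟪p, x⟫_ℝ ≤ K * t := by
    calc ⟪p, x⟫_ℝ ≤ ‖p‖ * ‖x‖ := real_inner_le_norm p x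
      _ ≤ K * t := mul_le_mul_of_nonneg_right hp (norm_nonneg x)
  have h2 : (K + C + |ℓ 0| + 1) * t - C ≤ ℓ x := by rw [← hCA]; exact hstep
  have habs : ℓ 0 ≤ |ℓ 0| := le_abs_self _
  nlinarith [abs_nonneg (ℓ 0)]

lemma exists_max (d : ℕ) (q' C : ℝ) (hq' : 1 < q') (hC : 0 < C)
    (ℓ : E d → ℝ) (hcont : Continuous ℓ)
    (hcoer : ∀ α : E d, C⁻¹ * ‖α‖ ^ q' - C ≤ ℓ α) (p : E d) :
    ∃ x : E d, ∀ y : E d, ⟪p, y⟫_ℝ - ℓ y ≤ ⟪p, x⟫_ℝ - ℓ x := by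
  set r : ℝ := max 1 ((C * (‖p‖ + C + |ℓ 0| + 1)) ^ (q' - 1)⁻¹) with hr
  have hr1 : (1 : ℝ) ≤ r := le_max_left _ _
  have hG : Continuous fun y : E d => ⟪p, y⟫_ℝ - ℓ y :=
    (continuous_const.inner continuous_id).sub hcont
  have hne : (Metric.closedBall (0 : E d) r).Nonempty :=
    ⟨0, by simp [Metric.mem_closedBall]; linarith⟩
  obtain ⟨x, hxball, hxmax⟩ :=
    (isCompact_closedBall (0 : E d) r).exists_isMaxOn hne hG.continuousOn
  refine ⟨x, fun y => ?_⟩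
  by_cases hy : y ∈ Metric.closedBall (0 : E d) r
  · exact hxmax hy
  · have hyn : r < ‖y‖ := by
      simp only [Metric.mem_closedBall, dist_zero_right, not_le] at hy
      exact hy
    have h := key_bound d q' C hq' hC ℓ hcoer ‖p‖ (norm_nonneg p) p y le_rfl hyn
    have h0' := hxmax (show (0 : E d) ∈ Metric.closedBall (0 : E d) r by
      simp [Metric.mem_closedBall]; linarith)
    have h0'' : ⟪p, (0 : E d)⟫_ℝ - ℓ 0 ≤ ⟪p, x⟫_ℝ - ℓ x := h0'
    rw [inner_zero_right] at h0''
    linarith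


/-- Strict convexity is equivalent to uniqueness of the maximizer in the
Legendre transform: let `q' ∈ (1,∞)`, `C > 0`, and let `ℓ : ℝ^d → ℝ` be differentiable and
coercive in the sense that `ℓ(α) ≥ C⁻¹|α|^{q'} − C` for all `α`.  Then `ℓ` is strictly convex
(in the sense that `ℓ(λα+(1−λ)β) < λℓ(α)+(1−λ)ℓ(β)` for all `α ≠ β` and `λ ∈ (0,1)`)
if and only if for every `p ∈ ℝ^d` the function `α ↦ −p·α − ℓ(α)` attains its supremum over
`ℝ^d` at exactly one point. -/
theorem strict_convexity_iff_unique_maximizer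
    (d : ℕ) (hd : 1 ≤ d) (q' C : ℝ) (hq' : 1 < q') (hC : 0 < C)
    (ℓ : E d → ℝ) (hdiff : Differentiable ℝ ℓ)
    (hcoer : ∀ α : E d, C⁻¹ * ‖α‖ ^ q' - C ≤ ℓ α) :
    (∀ α β : E d, α ≠ β → ∀ lam : ℝ, lam ∈ Ioo (0 : ℝ) 1 →
        ℓ (lam • α + (1 - lam) • β) < lam * ℓ α + (1 - lam) * ℓ β)
      ↔ (∀ p : E d, ∃! α : E d, ∀ β : E d,
          -⟪p, β⟫_ℝ - ℓ β ≤ -⟪p, α⟫_ℝ - ℓ α) := by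
  have hcont : Continuous ℓ := hdiff.continuous
  constructor
  · -- strict convexity → unique maximizer
    intro hsc p
    obtain ⟨x, hx⟩ := exists_max d q' C hq' hC ℓ hcont hcoer (-p)
    have hx' : ∀ β : E d, -⟪p, β⟫_ℝ - ℓ β ≤ -⟪p, x⟫_ℝ - ℓ x := by
      intro β
      have := hx β
      rwa [inner_neg_left, inner_neg_left] at this
    refine ⟨x, hx', ?_⟩
    intro y hy
    by_contra hne
    have h1 : -⟪p, y⟫_ℝ - ℓ y = -⟪p, x⟫_ℝ - ℓ x := le_antisymm (hx' y) (hy x)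
    set z : E d := (1/2 : ℝ) • y + (1 - 1/2 : ℝ) • x with hz
    have hscz := hsc y x hne (1/2) (by constructor <;> norm_num)
    have hiz : ⟪p, z⟫_ℝ = (1/2 : ℝ) * ⟪p, y⟫_ℝ + (1 - 1/2 : ℝ) * ⟪p, x⟫_ℝ := by
      rw [hz, inner_add_right, real_inner_smul_right, real_inner_smul_right]
    rw [← hz] at hscz
    have hzle := hx' z
    rw [hiz] at hzle
    linarith [hscz, hzle, h1]
  · -- unique maximizer → strict convexity
    intro hR α β hne lam hlam
    -- reformulate with tilts ⟪p,·⟫ - ℓ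
    have hU : ∀ p : E d, ∃! x : E d, ∀ y : E d, ⟪p, y⟫_ℝ - ℓ y ≤ ⟪p, x⟫_ℝ - ℓ x := by
      intro p
      obtain ⟨a, ha1, ha2⟩ := hR (-p)
      refine ⟨a, ?_, ?_⟩
      · intro y
        have := ha1 y
        rwa [inner_neg_left, inner_neg_left, neg_neg, neg_neg] at this
      · intro y hy
        refine ha2 y ?_
        intro b
        have hb := hy b
        rwa [inner_neg_left, inner_neg_left, neg_neg, neg_neg]
    choose m hm1 hm2 using hU
    set γ : E d := lam • α + (1 - lam) • β with hγ
    -- bound on maximizers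
    have hbnd : ∀ (K : ℝ) (p : E d), 0 ≤ K → ‖p‖ ≤ K →
        ‖m p‖ ≤ max 1 ((C * (K + C + |ℓ 0| + 1)) ^ (q' - 1)⁻¹) := by
      intro K p hK hp
      by_contra hgt
      push_neg at hgt
      have h := key_bound d q' C hq' hC ℓ hcoer K hK p (m p) hp hgt
      have h0 : ⟪p, (0 : E d)⟫_ℝ - ℓ 0 ≤ ⟪p, m p⟫_ℝ - ℓ (m p) := hm1 p 0
      rw [inner_zero_right] at h0
      linarith
    set L : E d → ℝ := fun p => ⟪p, m p⟫_ℝ - ℓ (m p) with hL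
    -- Lipschitz-type bound
    have hlipA : ∀ p q : E d, L p - L q ≤ ⟪p - q, m p⟫_ℝ := by
      intro p q
      have h := hm1 q (m p)
      have : ⟪q, m p⟫_ℝ = ⟪p, m p⟫_ℝ - ⟪p - q, m p⟫_ℝ := by
        rw [inner_sub_left]; ring
      rw [this] at h
      simp only [hL]
      linarith
    -- continuity of L on closed balls
    have hLcont : ∀ r : ℝ, 0 ≤ r → ContinuousOn L (Metric.closedBall (0 : E d) r) := by
      intro r hr
      set ρ : ℝ := max 1 ((C * (r + C + |ℓ 0| + 1)) ^ (q' - 1)⁻¹) with hρ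
      have hρ0 : 0 ≤ ρ := le_trans zero_le_one (le_max_left _ _)
      have hlip : LipschitzOnWith ρ.toNNReal L (Metric.closedBall (0 : E d) r) := by
        apply LipschitzOnWith.of_dist_le_mul
        intro p hp q hq
        have hmp : ‖m p‖ ≤ ρ := hbnd r p hr (by simpa [dist_zero_right] using hp)
        have hmq : ‖m q‖ ≤ ρ := hbnd r q hr (by simpa [dist_zero_right] using hq)
        have h1 : L p - L q ≤ ρ * dist p q := by
          calc L p - L q ≤ ⟪p - q, m p⟫_ℝ := hlipA p q
            _ ≤ ‖p - q‖ * ‖m p‖ := real_inner_le_norm _ _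
            _ ≤ ‖p - q‖ * ρ := mul_le_mul_of_nonneg_left hmp (norm_nonneg _)
            _ = ρ * dist p q := by rw [dist_eq_norm]; ring
        have h2 : L q - L p ≤ ρ * dist p q := by
          calc L q - L p ≤ ⟪q - p, m q⟫_ℝ := hlipA q p
            _ ≤ ‖q - p‖ * ‖m q‖ := real_inner_le_norm _ _
            _ ≤ ‖q - p‖ * ρ := mul_le_mul_of_nonneg_left hmq (norm_nonneg _)
            _ = ρ * dist p q := by rw [dist_eq_norm, norm_sub_rev]; ring
        rw [Real.dist_eq, Real.coe_toNNReal ρ hρ0]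
        exact abs_sub_le_iff.2 ⟨by linarith, by linarith⟩
      exact hlip.continuousOn
    -- bound of ℓ on the unit ball around γ
    obtain ⟨z₀, -, hz₀⟩ := (isCompact_closedBall γ 1).exists_isMaxOn
      ⟨γ, Metric.mem_closedBall_self zero_le_one⟩ hcont.continuousOn
    set B : ℝ := ℓ z₀ with hB
    have hBbound : ∀ u : E d, ‖u‖ ≤ 1 → ℓ (γ + u) ≤ B := by
      intro u hu
      refine hz₀ ?_
      rw [Metric.mem_closedBall, dist_eq_norm]
      simpa using hu
    -- coercivity of the dual gap function
    have hcoerD : ∀ p : E d, p ≠ 0 → ‖p‖ - B ≤ L p - ⟪p, γ⟫_ℝ := by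
      intro p hp
      set u : E d := ‖p‖⁻¹ • p with hu
      have hpn : (0 : ℝ) < ‖p‖ := norm_pos_iff.mpr hp
      have hun : ‖u‖ ≤ 1 := by
        rw [hu, norm_smul, norm_inv, norm_norm, inv_mul_cancel₀ hpn.ne']
      have h1 : ⟪p, γ + u⟫_ℝ - ℓ (γ + u) ≤ L p := hm1 p (γ + u)
      have h2 : ⟪p, u⟫_ℝ = ‖p‖ := by
        rw [hu, real_inner_smul_right, real_inner_self_eq_norm_mul_norm]
        field_simp
      have h3 : ℓ (γ + u) ≤ B := hBbound u hun
      rw [inner_add_right, h2] at h1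
      linarith
    -- minimize the dual gap over a large ball
    set r₀ : ℝ := |B| + |L 0| + 1 with hr₀
    have hr₀1 : (1 : ℝ) ≤ r₀ := by
      have := abs_nonneg B; have := abs_nonneg (L 0); linarith
    have hDcont : ContinuousOn (fun p : E d => L p - ⟪p, γ⟫_ℝ)
        (Metric.closedBall (0 : E d) r₀) :=
      (hLcont r₀ (by linarith)).sub (continuous_id.inner continuous_const).continuousOn
    obtain ⟨p₀, hp₀ball, hp₀min⟩ := (isCompact_closedBall (0 : E d) r₀).exists_isMinOn
      ⟨0, by simp [Metric.mem_closedBall]; linarith⟩ hDcont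
    have hglob : ∀ q : E d, L p₀ - ⟪p₀, γ⟫_ℝ ≤ L q - ⟪q, γ⟫_ℝ := by
      intro q
      by_cases hq : q ∈ Metric.closedBall (0 : E d) r₀
      · exact hp₀min hq
      · have hqn : r₀ < ‖q‖ := by
          simpa [Metric.mem_closedBall, dist_zero_right, not_le] using hq
        have hq0 : q ≠ 0 := by
          intro h
          rw [h, norm_zero] at hqn
          linarith
        have h1 := hcoerD q hq0
        have h0 : L p₀ - ⟪p₀, γ⟫_ℝ ≤ L 0 - ⟪(0 : E d), γ⟫_ℝ :=
          hp₀min (by simp [Metric.mem_closedBall]; linarith)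
        rw [inner_zero_left] at h0
        linarith [le_abs_self (L 0), le_abs_self B]
    -- Danskin argument: γ is the maximizer at p₀
    have hkey : m p₀ = γ := by
      have hvle : ∀ v : E d, ⟪v, γ - m p₀⟫_ℝ ≤ 0 := by
        intro v
        set t : ℕ → ℝ := fun n => 1 / ((n : ℝ) + 1) with htdef
        have ht0 : ∀ n, 0 < t n := fun n => by positivity
        have ht1 : ∀ n, t n ≤ 1 := by
          intro n
          rw [htdef]
          rw [div_le_one (by positivity)]
          simp
        have htlim : Filter.Tendsto t Filter.atTop (nhds 0) :=
          tendsto_one_div_add_atTop_nhds_zero_nat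
        set pn : ℕ → E d := fun n => p₀ + t n • v with hpn
        set K : ℝ := ‖p₀‖ + ‖v‖ with hK
        have hKn : ∀ n, ‖pn n‖ ≤ K := by
          intro n
          calc ‖pn n‖ ≤ ‖p₀‖ + ‖t n • v‖ := norm_add_le _ _
            _ = ‖p₀‖ + |t n| * ‖v‖ := by rw [norm_smul, Real.norm_eq_abs]
            _ ≤ ‖p₀‖ + 1 * ‖v‖ := by
                have h := abs_of_pos (ht0 n)
                have := ht1 n
                have := norm_nonneg v
                nlinarith
            _ = K := by rw [hK, one_mul]
        have hsplit : ∀ (k : ℕ) (z : E d),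
            ⟪pn k, z⟫_ℝ = ⟪p₀, z⟫_ℝ + t k * ⟪v, z⟫_ℝ := by
          intro k z
          have hk : pn k = p₀ + t k • v := rfl
          rw [hk, inner_add_left, real_inner_smul_left]
        set ρK : ℝ := max 1 ((C * (K + C + |ℓ 0| + 1)) ^ (q' - 1)⁻¹) with hρK
        have hxn : ∀ n, m (pn n) ∈ Metric.closedBall (0 : E d) ρK := by
          intro n
          rw [Metric.mem_closedBall, dist_zero_right]
          exact hbnd K (pn n) (by positivity) (hKn n)
        obtain ⟨x, -, φ, hφ, hconv⟩ :=
          tendsto_subseq_of_bounded Metric.isBounded_closedBall hxn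
        have htφ : Filter.Tendsto (fun n => t (φ n)) Filter.atTop (nhds 0) :=
          htlim.comp hφ.tendsto_atTop
        have hinner_xφ : Filter.Tendsto (fun n => ⟪v, m (pn (φ n))⟫_ℝ)
            Filter.atTop (nhds ⟪v, x⟫_ℝ) :=
          ((continuous_const.inner continuous_id).tendsto x).comp hconv
        -- x is a maximizer for p₀
        have hxmax : ∀ y : E d, ⟪p₀, y⟫_ℝ - ℓ y ≤ ⟪p₀, x⟫_ℝ - ℓ x := by
          intro y
          have hineq : ∀ n, (⟪p₀, y⟫_ℝ - ℓ y) + t (φ n) * ⟪v, y⟫_ℝ ≤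
              (⟪p₀, m (pn (φ n))⟫_ℝ - ℓ (m (pn (φ n)))) +
                t (φ n) * ⟪v, m (pn (φ n))⟫_ℝ := by
            intro n
            have h := hm1 (pn (φ n)) y
            rw [hsplit (φ n) y, hsplit (φ n) (m (pn (φ n)))] at h
            linarith
          have hlhs : Filter.Tendsto
              (fun n => (⟪p₀, y⟫_ℝ - ℓ y) + t (φ n) * ⟪v, y⟫_ℝ)
              Filter.atTop (nhds (⟪p₀, y⟫_ℝ - ℓ y)) := by
            have h := htφ.mul_const ⟪v, y⟫_ℝ
            have h2 := (tendsto_const_nhds : Filter.Tendsto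
              (fun _ : ℕ => ⟪p₀, y⟫_ℝ - ℓ y) Filter.atTop
              (nhds (⟪p₀, y⟫_ℝ - ℓ y))).add h
            simpa using h2
          have hrhs : Filter.Tendsto
              (fun n => (⟪p₀, m (pn (φ n))⟫_ℝ - ℓ (m (pn (φ n)))) +
                t (φ n) * ⟪v, m (pn (φ n))⟫_ℝ)
              Filter.atTop (nhds (⟪p₀, x⟫_ℝ - ℓ x)) := by
            have hG : Filter.Tendsto (fun n => ⟪p₀, m (pn (φ n))⟫_ℝ - ℓ (m (pn (φ n))))
                Filter.atTop (nhds (⟪p₀, x⟫_ℝ - ℓ x)) :=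
              (((continuous_const.inner continuous_id).sub hcont).tendsto x).comp hconv
            have hmul : Filter.Tendsto (fun n => t (φ n) * ⟪v, m (pn (φ n))⟫_ℝ)
                Filter.atTop (nhds 0) := by
              have := htφ.mul hinner_xφ
              simpa using this
            have := hG.add hmul
            simpa using this
          exact le_of_tendsto_of_tendsto' hlhs hrhs hineq
        have hxeq : x = m p₀ := hm2 p₀ x hxmax
        -- the directional inequality
        have hdir : ∀ n, ⟪v, γ⟫_ℝ ≤ ⟪v, m (pn n)⟫_ℝ := by
          intro n
          have hg := hglob (pn n)
          rw [hsplit n γ] at hg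
          have hl := hlipA (pn n) p₀
          have hd : pn n - p₀ = t n • v := by simp [hpn]
          rw [hd, real_inner_smul_left] at hl
          have : t n * ⟪v, γ⟫_ℝ ≤ t n * ⟪v, m (pn n)⟫_ℝ := by linarith
          exact (mul_le_mul_iff_right₀ (ht0 n)).mp this
        have hfin : ⟪v, γ⟫_ℝ ≤ ⟪v, x⟫_ℝ :=
          le_of_tendsto_of_tendsto' tendsto_const_nhds hinner_xφ fun n => hdir (φ n)
        rw [hxeq] at hfin
        rw [inner_sub_right]
        linarith
      have h := hvle (γ - m p₀)
      have := real_inner_self_nonpos.mp h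
      rw [sub_eq_zero] at this
      exact this.symm
    -- conclude strict convexity at (α, β, lam)
    have hmaxγ : ∀ y : E d, ⟪p₀, y⟫_ℝ - ℓ y ≤ ⟪p₀, γ⟫_ℝ - ℓ γ := by
      intro y
      have := hm1 p₀ y
      rwa [hkey] at this
    have huniq : ∀ y : E d, y ≠ γ → ⟪p₀, y⟫_ℝ - ℓ y < ⟪p₀, γ⟫_ℝ - ℓ γ := by
      intro y hy
      rcases lt_or_eq_of_le (hmaxγ y) with h | h
      · exact h
      · exfalso
        apply hy
        have heq : y = m p₀ := hm2 p₀ y fun z => le_trans (hmaxγ z) (le_of_eq h.symm)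
        rw [heq, hkey]
    obtain ⟨hl0, hl1⟩ := hlam
    have hαγ : α ≠ γ := by
      intro hc
      have h4 : lam • α + (1 - lam) • α = α := by
        rw [← add_smul]
        norm_num
      have h3 : lam • α + (1 - lam) • α = lam • α + (1 - lam) • β := by
        rw [h4]
        exact hc
      have h5 : (1 - lam) • α = (1 - lam) • β := add_left_cancel h3
      exact hne ((smul_right_inj (by linarith : (1 : ℝ) - lam ≠ 0)).mp h5)
    have hβγ : β ≠ γ := by
      intro hc
      have h4 : lam • β + (1 - lam) • β = β := by
        rw [← add_smul]
        norm_num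
      have h3 : lam • α + (1 - lam) • β = lam • β + (1 - lam) • β := by
        rw [h4]
        exact hc.symm
      have h5 : lam • α = lam • β := add_right_cancel h3
      exact hne ((smul_right_inj (by linarith : lam ≠ 0)).mp h5)
    have h1 := huniq α hαγ
    have h2 := huniq β hβγ
    have hinner : ⟪p₀, γ⟫_ℝ = lam * ⟪p₀, α⟫_ℝ + (1 - lam) * ⟪p₀, β⟫_ℝ := by
      rw [hγ, inner_add_right, real_inner_smul_right, real_inner_smul_right]
    have hm1' := mul_lt_mul_of_pos_left h1 hl0
    have hm2' := mul_lt_mul_of_pos_left h2 (by linarith : (0 : ℝ) < 1 - lam)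
    nlinarith [hm1', hm2', hinner]
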